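/- Let Π' be a connected planar subdivision containing all edges of the boundary of U(γ) for a connected component γ, where U(γ) is the union of closures of bounded faces of Π_γ. If a point q lies in U(γ), then q lies in the closure of some bounded face of Π', and hence in some cell of the vertical decomposition of Π'. -/

import Mathlib

open Set Metric Bornology

/-- A preconnected set meeting both a set and its complement meets the frontier. -/
lemma isPreconnected_inter_frontier_nonempty {X : Type*} [TopologicalSpace X]
    {s F : Set X} (hs : IsPreconnected s) (h1 : (s ∩ F).Nonempty)
    (h2 : (s \ F).Nonempty) : (s ∩ frontier F).Nonempty := by
  by_contra h
  rw [not_nonempty_iff_eq_empty] at h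
  have hdis : ∀ x ∈ s, x ∉ frontier F := by
    intro x hx hf
    exact (eq_empty_iff_forall_notMem.mp h x) ⟨hx, hf⟩
  have hsub : s ⊆ interior F ∪ (closure F)ᶜ := by
    intro x hx
    by_cases hc : x ∈ closure F
    · left
      by_contra hint
      exact hdis x hx ⟨hc, hint⟩
    · right; exact hc
  obtain ⟨a, ha, haF⟩ := h1
  obtain ⟨b, hb, hbF⟩ := h2
  have h1' : (s ∩ interior F).Nonempty := by
    refine ⟨a, ha, ?_⟩
    by_contra hint
    exact hdis a ha ⟨subset_closure haF, hint⟩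
  have h2' : (s ∩ (closure F)ᶜ).Nonempty := by
    refine ⟨b, hb, ?_⟩
    intro hc
    exact hdis b hb ⟨hc, fun hint => hbF (interior_subset hint)⟩
  obtain ⟨z, _, hz1, hz2⟩ := hs (interior F) (closure F)ᶜ isOpen_interior
    isClosed_closure.isOpen_compl hsub h1' h2'
  exact hz2 (subset_closure (interior_subset hz1))

/-- `fill K` = `U(K)`: the union of the closures of all bounded faces of `K`. -/
def fill (K : Set (ℝ × ℝ)) : Set (ℝ × ℝ) :=
  ⋃ x ∈ {x | x ∉ K ∧ Bornology.IsBounded (connectedComponentIn Kᶜ x)},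
    closure (connectedComponentIn Kᶜ x)

/-- If `K` is bounded, so is `fill K`. -/
lemma fill_bounded {K : Set (ℝ × ℝ)} (hK : IsBounded K) : IsBounded (fill K) := by
  obtain ⟨R, hR⟩ := (isBounded_iff_subset_closedBall (0 : ℝ × ℝ)).mp hK
  have hR0 : 0 ≤ R ∨ K = ∅ := by
    rcases K.eq_empty_or_nonempty with h | ⟨k, hk⟩
    · exact Or.inr h
    · exact Or.inl (le_trans (norm_nonneg k) (by simpa using hR hk))
  -- every bounded component of `Kᶜ` lies in `closedBall 0 R'` with `R' = max R 0`
  set R' := max R 0 with hR'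
  have hKR' : K ⊆ closedBall 0 R' := hR.trans (closedBall_subset_closedBall (le_max_left _ _))
  have key : ∀ x, x ∉ K → IsBounded (connectedComponentIn Kᶜ x) →
      connectedComponentIn Kᶜ x ⊆ closedBall 0 R' := by
    intro x hx hbd c hc
    by_contra hcR
    have hcnorm : R' < ‖c‖ := by
      simpa [mem_closedBall, dist_eq_norm] using hcR
    -- the ray from `c` to infinity stays in `Kᶜ`
    set S : Set (ℝ × ℝ) := (fun t : ℝ => t • c) '' Ici 1 with hS
    have hSnorm : ∀ z ∈ S, R' < ‖z‖ := by
      rintro z ⟨t, ht, rfl⟩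
      have h1 : (1 : ℝ) ≤ t := ht
      calc R' < ‖c‖ := hcnorm
        _ = 1 * ‖c‖ := (one_mul _).symm
        _ ≤ t * ‖c‖ := by
            exact mul_le_mul_of_nonneg_right h1 (norm_nonneg c)
        _ = ‖t • c‖ := by rw [norm_smul, Real.norm_eq_abs, abs_of_nonneg (le_trans zero_le_one h1)]
    have hSK : S ⊆ Kᶜ := by
      intro z hz hzK
      have := hKR' hzK
      simp only [mem_closedBall, dist_eq_norm, sub_zero] at this
      exact absurd this (not_le.mpr (hSnorm z hz))
    have hScon : IsPreconnected S :=
      (isPreconnected_Ici).image _ ((continuous_id.smul continuous_const).continuousOn)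
    have hcS : c ∈ S := ⟨1, mem_Ici.mpr le_rfl, one_smul _ _⟩
    have hcC : connectedComponentIn Kᶜ c = connectedComponentIn Kᶜ x :=
      (connectedComponentIn_eq hc).symm
    have hSsub : S ⊆ connectedComponentIn Kᶜ x := by
      rw [← hcC]
      exact hScon.subset_connectedComponentIn hcS hSK
    -- but `S` is unbounded
    obtain ⟨r, hr⟩ := (isBounded_iff_subset_closedBall (0 : ℝ × ℝ)).mp hbd
    have hcpos : 0 < ‖c‖ := lt_of_le_of_lt (le_max_right R 0) hcnorm
    set t : ℝ := max 1 ((r + 1) / ‖c‖) with ht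
    have h1t : (1 : ℝ) ≤ t := le_max_left _ _
    have htc : t • c ∈ S := ⟨t, h1t, rfl⟩
    have := hr (hSsub htc)
    simp only [mem_closedBall, dist_eq_norm, sub_zero] at this
    have : ‖t • c‖ ≤ r := this
    rw [norm_smul, Real.norm_eq_abs, abs_of_nonneg (le_trans zero_le_one h1t)] at this
    have h2 : (r + 1) / ‖c‖ * ‖c‖ ≤ t * ‖c‖ :=
      mul_le_mul_of_nonneg_right (le_max_right _ _) (norm_nonneg c)
    rw [div_mul_cancel₀ _ (ne_of_gt hcpos)] at h2
    linarith
  apply IsBounded.subset (isBounded_closedBall (x := (0:ℝ×ℝ)) (r := R'))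
  intro z hz
  simp only [fill, mem_iUnion, mem_setOf_eq] at hz
  obtain ⟨x, ⟨hx, hbd⟩, hzc⟩ := hz
  exact (isClosed_closedBall.closure_subset_iff.mpr (key x hx hbd)) hzc

/-- Let `γ` be a connected component (a compact connected set of edges and vertices)
and `Π'` a connected subdivision, with edge union `E' ⊆ γ`, containing all edges of
the boundary of `U(γ)` (i.e. `frontier (fill γ) ⊆ E'`).  If a point `q` lies in
`U(γ)`, then `q` lies in the closure of some bounded face of `Π'` (and hence in some
cell of the vertical decomposition of `Π'`). -/
theorem point_of_fill_in_closure_of_bounded_face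
    (γ : Set (ℝ × ℝ)) (hγc : IsClosed γ) (hγconn : IsConnected γ)
    (hγcpt : IsCompact γ)
    (E' : Set (ℝ × ℝ)) (hE'c : IsClosed E') (hE'conn : IsConnected E')
    (hsub : E' ⊆ γ) (hbd : frontier (fill γ) ⊆ E')
    (q : ℝ × ℝ) (hq : q ∈ fill γ) :
    ∃ x, x ∉ E' ∧ Bornology.IsBounded (connectedComponentIn E'ᶜ x) ∧
      q ∈ closure (connectedComponentIn E'ᶜ x) := by
  simp only [fill, mem_iUnion, mem_setOf_eq] at hq
  obtain ⟨x, ⟨hxγ, hCbd⟩, hqC⟩ := hq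
  set C := connectedComponentIn γᶜ x with hC
  set D := connectedComponentIn E'ᶜ x with hD
  have hCD : C ⊆ D := connectedComponentIn_mono x (compl_subset_compl.mpr hsub)
  have hxE' : x ∉ E' := fun h => hxγ (hsub h)
  refine ⟨x, hxE', ?_, closure_mono hCD hqC⟩
  -- `D` is bounded
  by_contra hDub
  have hFbd : IsBounded (fill γ) := fill_bounded hγcpt.isBounded
  have hxF : x ∈ fill γ := by
    have hxC : x ∈ C := mem_connectedComponentIn hxγ
    simp only [fill, mem_iUnion, mem_setOf_eq]
    exact ⟨x, ⟨hxγ, hCbd⟩, subset_closure hxC⟩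
  have h1 : (D ∩ fill γ).Nonempty :=
    ⟨x, mem_connectedComponentIn hxE', hxF⟩
  have h2 : (D \ fill γ).Nonempty := by
    by_contra h
    rw [not_nonempty_iff_eq_empty, diff_eq_empty] at h
    exact hDub (hFbd.subset h)
  obtain ⟨z, hzD, hzf⟩ := isPreconnected_inter_frontier_nonempty
    isPreconnected_connectedComponentIn h1 h2
  exact (connectedComponentIn_subset E'ᶜ x hzD) (hbd hzf)
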